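/- As f → 0, the effective diffusion coefficient satisfies D(f) = (1/a₀)·(1 + f·(a₁/a₀ − 1/2)) + O(f²); that is, D(f) − 1/a₀ − (f/a₀)·(a₁/a₀ − 1/2) is O(f²) near f = 0. -/

import Mathlib

open MeasureTheory intervalIntegral Asymptotics Filter

noncomputable def w0 (φ : ℝ → ℝ) (f x : ℝ) : ℝ :=
  ∫ s in (0:ℝ)..1, Real.exp (φ (x + s) - φ x - f * s)

noncomputable def M0 (φ : ℝ → ℝ) (f : ℝ) : ℝ := ∫ x in (0:ℝ)..1, w0 φ f x

noncomputable def w1 (φ : ℝ → ℝ) (f x : ℝ) : ℝ :=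
  ∫ s in (0:ℝ)..1, (w0 φ f (x + s)) ^ 2 * Real.exp (φ (x + s) - φ x - f * s)

noncomputable def M1 (φ : ℝ → ℝ) (f : ℝ) : ℝ := ∫ x in (0:ℝ)..1, w1 φ f x

/-! ### Auxiliary definitions and lemmas -/

noncomputable def uu (φ : ℝ → ℝ) (y : ℝ) : ℝ :=
  ∫ s in (0:ℝ)..1, Real.exp (φ (y + s) - φ y) * s

section Aux

variable {φ : ℝ → ℝ} {K : ℝ}

lemma shift_integral (g : ℝ → ℝ) (hg : ∀ x, g (x + 1) = g x) (c : ℝ) :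
    ∫ s in (0:ℝ)..1, g (c + s) = ∫ s in (0:ℝ)..1, g s := by
  have hper : Function.Periodic g 1 := hg
  rw [intervalIntegral.integral_comp_add_left]
  simpa using hper.intervalIntegral_add_eq c 0

lemma phi_bdd (φ : ℝ → ℝ) (hφc : Continuous φ) (hφper : ∀ x, φ (x + 1) = φ x) :
    ∃ K : ℝ, 0 ≤ K ∧ ∀ x, |φ x| ≤ K := by
  obtain ⟨K, hK⟩ := (isCompact_Icc (a := (0:ℝ)) (b := 1)).exists_bound_of_continuousOn
    hφc.continuousOn
  refine ⟨K, le_trans (abs_nonneg _) (hK 0 (by norm_num)), fun x => ?_⟩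
  have hper : Function.Periodic φ 1 := hφper
  have h1 : φ (x - (⌊x⌋ : ℝ) * 1) = φ x := hper.sub_int_mul_eq ⌊x⌋
  have h2 : x - (⌊x⌋ : ℝ) * 1 = Int.fract x := by rw [Int.fract]; ring
  rw [← h1, h2]
  exact hK _ ⟨Int.fract_nonneg x, (Int.fract_lt_one x).le⟩

lemma cont_shift_int (G : ℝ → ℝ) (hG : Continuous G) :
    Continuous fun y => ∫ t in y..y+1, G t := by
  have h := intervalIntegral.continuous_primitive
    (fun a b => hG.intervalIntegrable a b) 0 (μ := volume)
  have heq : (fun y => ∫ t in y..y+1, G t)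
      = fun y => (∫ t in (0:ℝ)..(y+1), G t) - ∫ t in (0:ℝ)..y, G t := by
    funext y
    rw [intervalIntegral.integral_interval_sub_left (hG.intervalIntegrable 0 (y+1))
      (hG.intervalIntegrable 0 y)]
  rw [heq]
  exact (h.comp (continuous_add_right 1)).sub h

lemma cont_param0 (g : ℝ → ℝ) (hg : Continuous g) :
    Continuous fun x => ∫ s in (0:ℝ)..1, g (x + s) := by
  have heq : (fun x => ∫ s in (0:ℝ)..1, g (x + s)) = fun x => ∫ t in x..x+1, g t := by
    funext x
    have := intervalIntegral.integral_comp_add_left (a := (0:ℝ)) (b := 1) g x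
    simpa using this
  rw [heq]; exact cont_shift_int g hg

lemma cont_param1 (g : ℝ → ℝ) (hg : Continuous g) :
    Continuous fun x => ∫ s in (0:ℝ)..1, g (x + s) * s := by
  have heq : (fun x => ∫ s in (0:ℝ)..1, g (x + s) * s)
      = fun x => (∫ t in x..x+1, t * g t) - x * ∫ t in x..x+1, g t := by
    funext x
    have h1 : ∀ s ∈ Set.uIcc (0:ℝ) 1,
        (fun s => g (x + s) * s) s = (fun s => (x + s) * g (x + s) - x * g (x + s)) s :=
      fun s _ => by dsimp only; ring
    rw [intervalIntegral.integral_congr h1,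
      intervalIntegral.integral_sub
        ((by fun_prop : Continuous fun s => (x + s) * g (x + s)).intervalIntegrable 0 1)
        ((by fun_prop : Continuous fun s => x * g (x + s)).intervalIntegrable 0 1),
      intervalIntegral.integral_const_mul]
    congr 1
    · have := intervalIntegral.integral_comp_add_left (a := (0:ℝ)) (b := 1)
        (fun t => t * g t) x
      simpa using this
    · congr 1
      have := intervalIntegral.integral_comp_add_left (a := (0:ℝ)) (b := 1) g x
      simpa using this
  rw [heq]
  exact (cont_shift_int _ (continuous_id.mul hg)).sub
    (continuous_id.mul (cont_shift_int g hg))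

lemma w0_eq (hφc : Continuous φ) (f y : ℝ) :
    w0 φ f y = Real.exp (f * y - φ y) * ∫ t in y..y+1, Real.exp (φ t - f * t) := by
  unfold w0
  have h1 : (∫ s in (0:ℝ)..1, Real.exp (φ (y + s) - φ y - f * s))
      = ∫ s in (0:ℝ)..1, Real.exp (f * y - φ y) * Real.exp (φ (y + s) - f * (y + s)) := by
    apply intervalIntegral.integral_congr
    intro s _
    dsimp only
    rw [← Real.exp_add]; ring_nf
  rw [h1, intervalIntegral.integral_const_mul]
  congr 1
  have h2 := intervalIntegral.integral_comp_add_left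
    (a := (0:ℝ)) (b := 1) (fun t => Real.exp (φ t - f * t)) y
  simpa using h2

lemma w0_cont (hφc : Continuous φ) (f : ℝ) : Continuous (w0 φ f) := by
  have hG : Continuous fun t => Real.exp (φ t - f * t) :=
    (hφc.sub (continuous_const.mul continuous_id)).rexp
  have h := cont_shift_int _ hG
  have : (w0 φ f) = fun y => Real.exp (f * y - φ y) * ∫ t in y..y+1, Real.exp (φ t - f * t) :=
    funext (w0_eq hφc f)
  rw [this]
  exact ((continuous_const.mul continuous_id).sub hφc).rexp.mul h

lemma uu_cont (hφc : Continuous φ) : Continuous (uu φ) := by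
  have heq : uu φ = fun y => Real.exp (-φ y) * ∫ s in (0:ℝ)..1, Real.exp (φ (y + s)) * s := by
    funext y
    unfold uu
    rw [← intervalIntegral.integral_const_mul]
    apply intervalIntegral.integral_congr
    intro s _
    dsimp only
    rw [Real.exp_sub, div_eq_mul_inv, ← Real.exp_neg]
    ring
  rw [heq]
  exact hφc.neg.rexp.mul (cont_param1 (fun t => Real.exp (φ t)) hφc.rexp)

lemma uu_per (hφper : ∀ x, φ (x + 1) = φ x) (y : ℝ) : uu φ (y + 1) = uu φ y := by
  unfold uu
  apply intervalIntegral.integral_congr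
  intro s _
  dsimp only
  have h1 : y + 1 + s = (y + s) + 1 := by ring
  rw [h1, hφper, hφper]

lemma mem_uIoc01 {s : ℝ} (hs : s ∈ Set.uIoc (0:ℝ) 1) : 0 < s ∧ s ≤ 1 := by
  rw [Set.uIoc_of_le (by norm_num : (0:ℝ) ≤ 1)] at hs
  exact ⟨hs.1, hs.2⟩

lemma arg_abs_le (hK : ∀ x, |φ x| ≤ K) {f s : ℝ} (hf : |f| ≤ 1) (hs : |s| ≤ 1) (x : ℝ) :
    |φ (x + s) - φ x - f * s| ≤ 2 * K + 1 := by
  have h1 := hK (x + s); have h2 := hK x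
  have h3 : |f * s| ≤ 1 := by
    rw [abs_mul]
    exact mul_le_one₀ hf (abs_nonneg _) hs
  calc |φ (x + s) - φ x - f * s| ≤ |φ (x + s) - φ x| + |f * s| := abs_sub _ _
    _ ≤ (|φ (x + s)| + |φ x|) + |f * s| := by gcongr; exact abs_sub _ _
    _ ≤ (K + K) + 1 := by gcongr
    _ = 2 * K + 1 := by ring

lemma integrand_le (hK : ∀ x, |φ x| ≤ K) {f s : ℝ} (hf : |f| ≤ 1) (hs : |s| ≤ 1) (x : ℝ) :
    Real.exp (φ (x + s) - φ x - f * s) ≤ Real.exp (2 * K + 1) :=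
  Real.exp_le_exp.2 (le_trans (le_abs_self _) (arg_abs_le hK hf hs x))

lemma integrand_ge (hK : ∀ x, |φ x| ≤ K) {f s : ℝ} (hf : |f| ≤ 1) (hs : |s| ≤ 1) (x : ℝ) :
    Real.exp (-(2 * K + 1)) ≤ Real.exp (φ (x + s) - φ x - f * s) :=
  Real.exp_le_exp.2 (neg_le_of_abs_le (arg_abs_le hK hf hs x))

lemma diff_abs_le (hK : ∀ x, |φ x| ≤ K) (x s : ℝ) : |φ (x + s) - φ x| ≤ 2 * K := by
  calc |φ (x + s) - φ x| ≤ |φ (x + s)| + |φ x| := abs_sub _ _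
    _ ≤ K + K := by gcongr <;> [exact hK _; exact hK _]
    _ = 2 * K := by ring

lemma w0_le (hK : ∀ x, |φ x| ≤ K) {f : ℝ} (hf : |f| ≤ 1) (x : ℝ) :
    |w0 φ f x| ≤ Real.exp (2 * K + 1) := by
  have h := intervalIntegral.norm_integral_le_of_norm_le_const
    (C := Real.exp (2 * K + 1)) (a := (0:ℝ)) (b := 1)
    (f := fun s => Real.exp (φ (x + s) - φ x - f * s)) ?_
  · unfold w0; simpa using h
  · intro s hs
    obtain ⟨h1, h2⟩ := mem_uIoc01 hs
    rw [Real.norm_eq_abs, abs_of_pos (Real.exp_pos _)]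
    exact integrand_le hK hf (by rw [abs_of_pos h1]; exact h2) x

lemma w0_ge (hφc : Continuous φ) (hK : ∀ x, |φ x| ≤ K) {f : ℝ} (hf : |f| ≤ 1) (x : ℝ) :
    Real.exp (-(2 * K + 1)) ≤ w0 φ f x := by
  have h0 : Real.exp (-(2 * K + 1)) = ∫ s in (0:ℝ)..1, Real.exp (-(2 * K + 1)) := by simp
  rw [h0]
  apply intervalIntegral.integral_mono_on (by norm_num)
    (intervalIntegrable_const)
    ((by fun_prop : Continuous fun s => Real.exp (φ (x + s) - φ x - f * s)).intervalIntegrable 0 1)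
  intro s hs
  exact integrand_ge hK hf (by rw [abs_of_nonneg hs.1]; exact hs.2) x

lemma uu_le (hK : ∀ x, |φ x| ≤ K) (y : ℝ) : |uu φ y| ≤ Real.exp (2 * K + 1) := by
  have h := intervalIntegral.norm_integral_le_of_norm_le_const
    (C := Real.exp (2 * K + 1)) (a := (0:ℝ)) (b := 1)
    (f := fun s => Real.exp (φ (y + s) - φ y) * s) ?_
  · unfold uu; simpa using h
  · intro s hs
    obtain ⟨h1, h2⟩ := mem_uIoc01 hs
    rw [Real.norm_eq_abs, abs_mul, abs_of_pos (Real.exp_pos _), abs_of_pos h1]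
    have hA : Real.exp (φ (y + s) - φ y) ≤ Real.exp (2 * K + 1) := by
      apply Real.exp_le_exp.2
      have h3 := diff_abs_le hK y s
      nlinarith [le_abs_self (φ (y + s) - φ y)]
    calc Real.exp (φ (y + s) - φ y) * s ≤ Real.exp (2 * K + 1) * 1 :=
          mul_le_mul hA h2 h1.le (Real.exp_pos _).le
      _ = Real.exp (2 * K + 1) := mul_one _

lemma w0_taylor (hφc : Continuous φ) (hK : ∀ x, |φ x| ≤ K) {f : ℝ} (hf : |f| ≤ 1) (y : ℝ) :
    |w0 φ f y - w0 φ 0 y + f * uu φ y| ≤ Real.exp (2 * K) * f ^ 2 := by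
  have key : w0 φ f y - w0 φ 0 y + f * uu φ y
      = ∫ s in (0:ℝ)..1, Real.exp (φ (y + s) - φ y) * (Real.exp (-(f * s)) - 1 + f * s) := by
    unfold w0 uu
    rw [← intervalIntegral.integral_const_mul,
      ← intervalIntegral.integral_sub
        ((by fun_prop : Continuous fun s => Real.exp (φ (y + s) - φ y - f * s)).intervalIntegrable 0 1)
        ((by fun_prop : Continuous fun s => Real.exp (φ (y + s) - φ y - 0 * s)).intervalIntegrable 0 1),
      ← intervalIntegral.integral_add
        (((by fun_prop : Continuous fun s => Real.exp (φ (y + s) - φ y - f * s)).intervalIntegrable 0 1).sub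
          ((by fun_prop : Continuous fun s => Real.exp (φ (y + s) - φ y - 0 * s)).intervalIntegrable 0 1))
        ((by fun_prop : Continuous fun s => f * (Real.exp (φ (y + s) - φ y) * s)).intervalIntegrable 0 1)]
    apply intervalIntegral.integral_congr
    intro s _
    dsimp only
    have e1 : φ (y + s) - φ y - f * s = (φ (y + s) - φ y) + (-(f * s)) := by ring
    have e2 : φ (y + s) - φ y - 0 * s = φ (y + s) - φ y := by ring
    rw [e1, e2, Real.exp_add]
    ring
  rw [key]
  have h := intervalIntegral.norm_integral_le_of_norm_le_const
    (C := Real.exp (2 * K) * f ^ 2) (a := (0:ℝ)) (b := 1)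
    (f := fun s => Real.exp (φ (y + s) - φ y) * (Real.exp (-(f * s)) - 1 + f * s)) ?_
  · calc |_| ≤ Real.exp (2 * K) * f ^ 2 * |1 - (0:ℝ)| := h
      _ = Real.exp (2 * K) * f ^ 2 := by norm_num
  · intro s hs
    obtain ⟨h1, h2⟩ := mem_uIoc01 hs
    rw [Real.norm_eq_abs, abs_mul, abs_of_pos (Real.exp_pos _)]
    have hA : Real.exp (φ (y + s) - φ y) ≤ Real.exp (2 * K) := by
      apply Real.exp_le_exp.2
      exact le_trans (le_abs_self _) (diff_abs_le hK y s)
    have hB : |Real.exp (-(f * s)) - 1 + f * s| ≤ f ^ 2 := by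
      have habs : |(-(f * s))| ≤ 1 := by
        rw [abs_neg, abs_mul]
        exact mul_le_one₀ hf (abs_nonneg _) (by rw [abs_of_pos h1]; exact h2)
      have hb := Real.abs_exp_sub_one_sub_id_le habs
      calc |Real.exp (-(f * s)) - 1 + f * s| = |Real.exp (-(f * s)) - 1 - (-(f * s))| := by
            ring_nf
        _ ≤ (-(f * s)) ^ 2 := hb
        _ = f ^ 2 * s ^ 2 := by ring
        _ ≤ f ^ 2 * 1 := by
              have hs2 : s ^ 2 ≤ 1 := by nlinarith
              nlinarith [sq_nonneg f]
        _ = f ^ 2 := mul_one _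
    calc Real.exp (φ (y + s) - φ y) * |Real.exp (-(f * s)) - 1 + f * s|
        ≤ Real.exp (2 * K) * f ^ 2 :=
          mul_le_mul hA hB (abs_nonneg _) (Real.exp_pos _).le


section Fub


lemma fubini_cont (F : ℝ → ℝ → ℝ) (hF : Continuous fun p : ℝ × ℝ => F p.1 p.2) :
    ∫ x in (0:ℝ)..1, ∫ s in (0:ℝ)..1, F x s = ∫ s in (0:ℝ)..1, ∫ x in (0:ℝ)..1, F x s := by
  have h01 : (0:ℝ) ≤ 1 := by norm_num
  have huncurry : Function.uncurry F = fun p : ℝ × ℝ => F p.1 p.2 := rfl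
  have hint : Integrable (Function.uncurry F)
      ((volume.restrict (Set.Ioc (0:ℝ) 1)).prod (volume.restrict (Set.Ioc (0:ℝ) 1))) := by
    rw [Measure.prod_restrict]
    have hcomp : IsCompact (Set.Icc (0:ℝ) 1 ×ˢ Set.Icc (0:ℝ) 1) :=
      isCompact_Icc.prod isCompact_Icc
    have h2 : IntegrableOn (Function.uncurry F) (Set.Icc (0:ℝ) 1 ×ˢ Set.Icc (0:ℝ) 1)
        (volume.prod volume) := by
      have h3 : IntegrableOn (Function.uncurry F) (Set.Icc (0:ℝ) 1 ×ˢ Set.Icc (0:ℝ) 1)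
          (volume : Measure (ℝ × ℝ)) := by
        rw [huncurry]; exact hF.continuousOn.integrableOn_compact hcomp
      rwa [Measure.volume_eq_prod] at h3
    exact h2.mono_set (Set.prod_mono Set.Ioc_subset_Icc_self Set.Ioc_subset_Icc_self)
  rw [intervalIntegral.integral_of_le h01, intervalIntegral.integral_of_le h01]
  simp_rw [intervalIntegral.integral_of_le h01]
  exact MeasureTheory.integral_integral_swap hint

lemma integrable_section (F : ℝ → ℝ → ℝ) (hF : Continuous fun p : ℝ × ℝ => F p.1 p.2) :
    IntervalIntegrable (fun s => ∫ x in (0:ℝ)..1, F x s) volume 0 1 := by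
  have h01 : (0:ℝ) ≤ 1 := by norm_num
  have hint : Integrable (Function.uncurry fun s x => F x s)
      ((volume.restrict (Set.Ioc (0:ℝ) 1)).prod (volume.restrict (Set.Ioc (0:ℝ) 1))) := by
    have huncurry : (Function.uncurry fun s x => F x s)
        = fun p : ℝ × ℝ => F p.2 p.1 := rfl
    rw [Measure.prod_restrict, huncurry]
    have hcomp : IsCompact (Set.Icc (0:ℝ) 1 ×ˢ Set.Icc (0:ℝ) 1) :=
      isCompact_Icc.prod isCompact_Icc
    have h2 : IntegrableOn (fun p : ℝ × ℝ => F p.2 p.1) (Set.Icc (0:ℝ) 1 ×ˢ Set.Icc (0:ℝ) 1)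
        (volume.prod volume) := by
      have h3 : IntegrableOn (fun p : ℝ × ℝ => F p.2 p.1) (Set.Icc (0:ℝ) 1 ×ˢ Set.Icc (0:ℝ) 1)
          (volume : Measure (ℝ × ℝ)) :=
        ((hF.comp (continuous_swap)).continuousOn).integrableOn_compact hcomp
      rwa [Measure.volume_eq_prod] at h3
    exact h2.mono_set (Set.prod_mono Set.Ioc_subset_Icc_self Set.Ioc_subset_Icc_self)
  have h := hint.integral_prod_left
  rw [intervalIntegrable_iff_integrableOn_Ioc_of_le h01]
  have heq : (fun s => ∫ x in (0:ℝ)..1, F x s)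
      = fun s => ∫ x in Set.Ioc (0:ℝ) 1, F x s := by
    funext s; exact intervalIntegral.integral_of_le h01
  rw [heq]
  exact h



lemma T_eq (hφc : Continuous φ) (hφper : ∀ x, φ (x + 1) = φ x) :
    (∫ x in (0:ℝ)..1, ∫ s in (0:ℝ)..1, Real.exp (-φ x) * Real.exp (-φ (x + s)) * s)
      = (∫ x in (0:ℝ)..1, Real.exp (-φ x)) ^ 2 / 2 := by
  set Im := ∫ x in (0:ℝ)..1, Real.exp (-φ x) with hIm
  set A : ℝ → ℝ := fun s => ∫ x in (0:ℝ)..1, Real.exp (-φ x) * Real.exp (-φ (x + s)) with hA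
  have hcont : Continuous fun p : ℝ × ℝ => Real.exp (-φ p.1) * Real.exp (-φ (p.1 + p.2)) * p.2 := by
    fun_prop
  have hcont' : Continuous fun p : ℝ × ℝ => Real.exp (-φ p.1) * Real.exp (-φ (p.1 + p.2)) := by
    fun_prop
  -- Step 1: Fubini
  have step1 : (∫ x in (0:ℝ)..1, ∫ s in (0:ℝ)..1, Real.exp (-φ x) * Real.exp (-φ (x + s)) * s)
      = ∫ s in (0:ℝ)..1, A s * s := by
    rw [fubini_cont _ hcont]
    apply intervalIntegral.integral_congr
    intro s _
    rw [hA]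
    dsimp only
    rw [← intervalIntegral.integral_mul_const]
  -- Step 3: symmetry of A
  have hAsymm : ∀ s, A (1 - s) = A s := by
    intro s
    have hg : ∀ x, Real.exp (-φ x) * Real.exp (-φ (x + (1 - s)))
        = (fun x => Real.exp (-φ x) * Real.exp (-φ (x - s))) x := by
      intro x
      have : x + (1 - s) = (x - s) + 1 := by ring
      rw [this, hφper]
    have hgper : ∀ x, (fun x => Real.exp (-φ x) * Real.exp (-φ (x - s))) (x + 1)
        = (fun x => Real.exp (-φ x) * Real.exp (-φ (x - s))) x := by
      intro x
      dsimp only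
      rw [hφper x]
      have : x + 1 - s = (x - s) + 1 := by ring
      rw [this, hφper]
    calc A (1 - s) = ∫ x in (0:ℝ)..1, Real.exp (-φ x) * Real.exp (-φ (x - s)) := by
          rw [hA]; exact intervalIntegral.integral_congr fun x _ => hg x
      _ = ∫ x in (0:ℝ)..1, Real.exp (-φ (s + x)) * Real.exp (-φ (s + x - s)) :=
          (shift_integral _ hgper s).symm
      _ = A s := by
          rw [hA]
          apply intervalIntegral.integral_congr
          intro x _
          dsimp only
          have h1 : s + x - s = x := by ring
          have h2 : s + x = x + s := by ring
          rw [h1, h2, mul_comm]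
  -- Step 4: integrability
  have hint1 : IntervalIntegrable (fun s => A s * s) volume 0 1 := by
    have := integrable_section (fun x s => Real.exp (-φ x) * Real.exp (-φ (x + s)) * s) hcont
    have heq : (fun s => ∫ x in (0:ℝ)..1, Real.exp (-φ x) * Real.exp (-φ (x + s)) * s)
        = fun s => A s * s := by
      funext s; rw [hA]; dsimp only; rw [← intervalIntegral.integral_mul_const]
    rwa [heq] at this
  have hint2 : IntervalIntegrable (fun s => A s * (1 - s)) volume 0 1 := by
    have hc2 : Continuous fun p : ℝ × ℝ =>
        Real.exp (-φ p.1) * Real.exp (-φ (p.1 + p.2)) * (1 - p.2) := by fun_prop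
    have := integrable_section (fun x s => Real.exp (-φ x) * Real.exp (-φ (x + s)) * (1 - s)) hc2
    have heq : (fun s => ∫ x in (0:ℝ)..1, Real.exp (-φ x) * Real.exp (-φ (x + s)) * (1 - s))
        = fun s => A s * (1 - s) := by
      funext s; rw [hA]; dsimp only; rw [← intervalIntegral.integral_mul_const]
    rwa [heq] at this
  -- Step 5: reflection
  have step5 : (∫ s in (0:ℝ)..1, A s * s) = ∫ s in (0:ℝ)..1, A s * (1 - s) := by
    have hrefl := intervalIntegral.integral_comp_sub_left (a := (0:ℝ)) (b := 1)
      (fun s => A s * s) 1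
    -- hrefl : ∫ s in 0..1, A (1 - s) * (1 - s) = ∫ s in 1-1..1-0, A s * s
    have h2 : (∫ s in (0:ℝ)..1, A (1 - s) * (1 - s)) = ∫ s in (0:ℝ)..1, A s * s := by
      simpa using hrefl
    rw [← h2]
    apply intervalIntegral.integral_congr
    intro s _
    dsimp only
    rw [hAsymm s]
  -- Step 2+6: conclusion
  have step6 : (∫ s in (0:ℝ)..1, A s) = Im ^ 2 := by
    have hfub := fubini_cont (fun x s => Real.exp (-φ x) * Real.exp (-φ (x + s))) hcont'
    have hAeq : (∫ s in (0:ℝ)..1, A s)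
        = ∫ x in (0:ℝ)..1, ∫ s in (0:ℝ)..1, Real.exp (-φ x) * Real.exp (-φ (x + s)) := by
      rw [hA]; exact hfub.symm
    rw [hAeq]
    have hinner : ∀ x, (∫ s in (0:ℝ)..1, Real.exp (-φ x) * Real.exp (-φ (x + s)))
        = Real.exp (-φ x) * Im := by
      intro x
      rw [intervalIntegral.integral_const_mul]
      congr 1
      exact shift_integral (fun t => Real.exp (-φ t)) (fun t => by rw [hφper]) x
    rw [intervalIntegral.integral_congr (fun x _ => hinner x), intervalIntegral.integral_mul_const]
    ring
  have hdouble : (∫ s in (0:ℝ)..1, A s * s) + (∫ s in (0:ℝ)..1, A s * s)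
      = ∫ s in (0:ℝ)..1, A s := by
    nth_rewrite 2 [step5]
    rw [← intervalIntegral.integral_add hint1 hint2]
    apply intervalIntegral.integral_congr
    intro s _
    ring
  rw [step1]
  rw [step6] at hdouble
  linarith

end Fub

end Aux

section Ident

variable {φ : ℝ → ℝ} {K : ℝ}

lemma w0_zero (hφc : Continuous φ) (hφper : ∀ x, φ (x + 1) = φ x) (y : ℝ) :
    w0 φ 0 y = (∫ s in (0:ℝ)..1, Real.exp (φ s)) * Real.exp (-φ y) := by
  rw [w0_eq hφc]
  have hper : Function.Periodic (fun t => Real.exp (φ t)) 1 := fun t => by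
    dsimp only; rw [hφper]
  have h2 := hper.intervalIntegral_add_eq y 0
  simp only [zero_add] at h2
  simp only [zero_mul, zero_sub, sub_zero]
  rw [h2, mul_comm]

lemma M0_zero (hφc : Continuous φ) (hφper : ∀ x, φ (x + 1) = φ x) :
    M0 φ 0 = (∫ x in (0:ℝ)..1, Real.exp (-φ x)) * ∫ s in (0:ℝ)..1, Real.exp (φ s) := by
  unfold M0
  rw [intervalIntegral.integral_congr (fun y _ => w0_zero hφc hφper y)]
  have : ∀ y ∈ Set.uIcc (0:ℝ) 1,
      (fun y => (∫ s in (0:ℝ)..1, Real.exp (φ s)) * Real.exp (-φ y)) y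
      = (fun y => (∫ s in (0:ℝ)..1, Real.exp (φ s)) * Real.exp (-φ y)) y := fun _ _ => rfl
  rw [intervalIntegral.integral_const_mul, mul_comm]

lemma M1_zero (hφc : Continuous φ) (hφper : ∀ x, φ (x + 1) = φ x) :
    M1 φ 0 = ((∫ x in (0:ℝ)..1, Real.exp (-φ x)) * ∫ s in (0:ℝ)..1, Real.exp (φ s)) ^ 2 := by
  set Ip := ∫ s in (0:ℝ)..1, Real.exp (φ s) with hIp
  set Im := ∫ x in (0:ℝ)..1, Real.exp (-φ x) with hIm
  unfold M1 w1
  have hinner : ∀ x, (∫ s in (0:ℝ)..1, (w0 φ 0 (x + s)) ^ 2 * Real.exp (φ (x + s) - φ x - 0 * s))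
      = (Ip ^ 2 * Im) * Real.exp (-φ x) := by
    intro x
    have hpt : ∀ s ∈ Set.uIcc (0:ℝ) 1,
        (fun s => (w0 φ 0 (x + s)) ^ 2 * Real.exp (φ (x + s) - φ x - 0 * s)) s
        = (fun s => (Ip ^ 2 * Real.exp (-φ x)) * Real.exp (-φ (x + s))) s := by
      intro s _
      dsimp only
      rw [w0_zero hφc hφper]
      have h1 : (Ip * Real.exp (-φ (x + s))) ^ 2 = Ip ^ 2 * Real.exp (-φ (x + s)) * Real.exp (-φ (x + s)) := by
        ring
      rw [h1]
      have h2 : Real.exp (-φ (x + s)) * Real.exp (φ (x + s) - φ x - 0 * s) = Real.exp (-φ x) := by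
        rw [← Real.exp_add]; congr 1; ring
      calc Ip ^ 2 * Real.exp (-φ (x + s)) * Real.exp (-φ (x + s)) * Real.exp (φ (x + s) - φ x - 0 * s)
          = Ip ^ 2 * Real.exp (-φ (x + s)) * (Real.exp (-φ (x + s)) * Real.exp (φ (x + s) - φ x - 0 * s)) := by ring
        _ = Ip ^ 2 * Real.exp (-φ (x + s)) * Real.exp (-φ x) := by rw [h2]
        _ = Ip ^ 2 * Real.exp (-φ x) * Real.exp (-φ (x + s)) := by ring
    rw [intervalIntegral.integral_congr hpt, intervalIntegral.integral_const_mul]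
    have hshift : (∫ s in (0:ℝ)..1, Real.exp (-φ (x + s))) = Im := by
      rw [hIm]
      exact shift_integral (fun t => Real.exp (-φ t)) (fun t => by rw [hφper]) x
    rw [hshift]; ring
  rw [intervalIntegral.integral_congr (fun x _ => hinner x), intervalIntegral.integral_const_mul]
  rw [← hIm]
  ring

lemma LA_eq (hφc : Continuous φ) (hφper : ∀ x, φ (x + 1) = φ x) :
    (∫ x in (0:ℝ)..1, ∫ s in (0:ℝ)..1,
        2 * w0 φ 0 (x + s) * uu φ (x + s) * Real.exp (φ (x + s) - φ x))
    = 2 * ((∫ x in (0:ℝ)..1, Real.exp (-φ x)) * ∫ s in (0:ℝ)..1, Real.exp (φ s))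
        * ∫ x in (0:ℝ)..1, uu φ x := by
  set Ip := ∫ s in (0:ℝ)..1, Real.exp (φ s) with hIp
  set Im := ∫ x in (0:ℝ)..1, Real.exp (-φ x) with hIm
  set J := ∫ x in (0:ℝ)..1, uu φ x with hJ
  have hinner : ∀ x, (∫ s in (0:ℝ)..1,
      2 * w0 φ 0 (x + s) * uu φ (x + s) * Real.exp (φ (x + s) - φ x))
      = (2 * Ip * J) * Real.exp (-φ x) := by
    intro x
    have hpt : ∀ s ∈ Set.uIcc (0:ℝ) 1,
        (fun s => 2 * w0 φ 0 (x + s) * uu φ (x + s) * Real.exp (φ (x + s) - φ x)) s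
        = (fun s => (2 * Ip * Real.exp (-φ x)) * uu φ (x + s)) s := by
      intro s _
      dsimp only
      rw [w0_zero hφc hφper]
      have h2 : Real.exp (-φ (x + s)) * Real.exp (φ (x + s) - φ x) = Real.exp (-φ x) := by
        rw [← Real.exp_add]; congr 1; ring
      calc 2 * (Ip * Real.exp (-φ (x + s))) * uu φ (x + s) * Real.exp (φ (x + s) - φ x)
          = 2 * Ip * uu φ (x + s) * (Real.exp (-φ (x + s)) * Real.exp (φ (x + s) - φ x)) := by ring
        _ = 2 * Ip * uu φ (x + s) * Real.exp (-φ x) := by rw [h2]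
        _ = (2 * Ip * Real.exp (-φ x)) * uu φ (x + s) := by ring
    rw [intervalIntegral.integral_congr hpt, intervalIntegral.integral_const_mul,
      shift_integral (uu φ) (uu_per hφper) x, ← hJ]
    ring
  rw [intervalIntegral.integral_congr (fun x _ => hinner x),
    intervalIntegral.integral_const_mul, ← hIm]
  ring

lemma LB_eq (hφc : Continuous φ) (hφper : ∀ x, φ (x + 1) = φ x) :
    (∫ x in (0:ℝ)..1, ∫ s in (0:ℝ)..1,
        (w0 φ 0 (x + s)) ^ 2 * Real.exp (φ (x + s) - φ x) * s)
    = ((∫ x in (0:ℝ)..1, Real.exp (-φ x)) * ∫ s in (0:ℝ)..1, Real.exp (φ s)) ^ 2 / 2 := by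
  set Ip := ∫ s in (0:ℝ)..1, Real.exp (φ s) with hIp
  set Im := ∫ x in (0:ℝ)..1, Real.exp (-φ x) with hIm
  have hpt : ∀ x, ∀ s ∈ Set.uIcc (0:ℝ) 1,
      (fun s => (w0 φ 0 (x + s)) ^ 2 * Real.exp (φ (x + s) - φ x) * s) s
      = (fun s => Ip ^ 2 * (Real.exp (-φ x) * Real.exp (-φ (x + s)) * s)) s := by
    intro x s _
    dsimp only
    rw [w0_zero hφc hφper]
    have h2 : Real.exp (-φ (x + s)) * Real.exp (φ (x + s) - φ x) = Real.exp (-φ x) := by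
      rw [← Real.exp_add]; congr 1; ring
    calc (Ip * Real.exp (-φ (x + s))) ^ 2 * Real.exp (φ (x + s) - φ x) * s
        = Ip ^ 2 * Real.exp (-φ (x + s)) * s *
            (Real.exp (-φ (x + s)) * Real.exp (φ (x + s) - φ x)) := by ring
      _ = Ip ^ 2 * Real.exp (-φ (x + s)) * s * Real.exp (-φ x) := by rw [h2]
      _ = Ip ^ 2 * (Real.exp (-φ x) * Real.exp (-φ (x + s)) * s) := by ring
  have houter : ∀ x ∈ Set.uIcc (0:ℝ) 1,
      (fun x => ∫ s in (0:ℝ)..1, (w0 φ 0 (x + s)) ^ 2 * Real.exp (φ (x + s) - φ x) * s) x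
      = (fun x => Ip ^ 2 * ∫ s in (0:ℝ)..1, Real.exp (-φ x) * Real.exp (-φ (x + s)) * s) x := by
    intro x _
    dsimp only
    rw [intervalIntegral.integral_congr (hpt x), intervalIntegral.integral_const_mul]
  rw [intervalIntegral.integral_congr houter, intervalIntegral.integral_const_mul,
    T_eq hφc hφper, ← hIm]
  ring

end Ident

section Taylor

variable {φ : ℝ → ℝ} {K : ℝ}

lemma abs_mul3_le {a b c A B C : ℝ} (ha : |a| ≤ A) (hb : |b| ≤ B) (hc : |c| ≤ C) :
    |a * b * c| ≤ A * B * C := by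
  have hA : 0 ≤ A := le_trans (abs_nonneg a) ha
  have hB : 0 ≤ B := le_trans (abs_nonneg b) hb
  rw [abs_mul, abs_mul]
  exact mul_le_mul (mul_le_mul ha hb (abs_nonneg b) hA) hc (abs_nonneg c)
    (mul_nonneg hA hB)

lemma abs_mul4_le {a b c d A B C D : ℝ} (ha : |a| ≤ A) (hb : |b| ≤ B) (hc : |c| ≤ C)
    (hd : |d| ≤ D) : |a * b * c * d| ≤ A * B * C * D := by
  have h3 := abs_mul3_le ha hb hc
  have hABC : 0 ≤ A * B * C := le_trans (abs_nonneg _) h3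
  rw [abs_mul]
  exact mul_le_mul h3 hd (abs_nonneg d) hABC

lemma M0_taylor (hφc : Continuous φ) (hK : ∀ x, |φ x| ≤ K) {f : ℝ} (hf : |f| ≤ 1) :
    |M0 φ f - M0 φ 0 + f * ∫ x in (0:ℝ)..1, uu φ x| ≤ Real.exp (2 * K) * f ^ 2 := by
  have key : M0 φ f - M0 φ 0 + f * ∫ x in (0:ℝ)..1, uu φ x
      = ∫ x in (0:ℝ)..1, (w0 φ f x - w0 φ 0 x + f * uu φ x) := by
    unfold M0
    rw [← intervalIntegral.integral_const_mul,
      ← intervalIntegral.integral_sub ((w0_cont hφc f).intervalIntegrable 0 1)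
        ((w0_cont hφc 0).intervalIntegrable 0 1),
      ← intervalIntegral.integral_add
        (show IntervalIntegrable (fun x => w0 φ f x - w0 φ 0 x) volume 0 1 from
          ((w0_cont hφc f).sub (w0_cont hφc 0)).intervalIntegrable 0 1)
        (show IntervalIntegrable (fun x => f * uu φ x) volume 0 1 from
          (continuous_const.mul (uu_cont hφc)).intervalIntegrable 0 1)]
  rw [key]
  have h := intervalIntegral.norm_integral_le_of_norm_le_const
    (C := Real.exp (2 * K) * f ^ 2) (a := (0:ℝ)) (b := 1)
    (f := fun x => w0 φ f x - w0 φ 0 x + f * uu φ x)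
    (fun x _ => by rw [Real.norm_eq_abs]; exact w0_taylor hφc hK hf x)
  calc |_| ≤ Real.exp (2 * K) * f ^ 2 * |1 - (0:ℝ)| := h
    _ = Real.exp (2 * K) * f ^ 2 := by norm_num

lemma w1_eq (hφc : Continuous φ) (f x : ℝ) :
    w1 φ f x = Real.exp (f * x - φ x)
      * ∫ t in x..x+1, (w0 φ f t) ^ 2 * Real.exp (φ t - f * t) := by
  unfold w1
  have h1 : ∀ s ∈ Set.uIcc (0:ℝ) 1,
      (fun s => (w0 φ f (x + s)) ^ 2 * Real.exp (φ (x + s) - φ x - f * s)) s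
      = (fun s => Real.exp (f * x - φ x)
          * ((w0 φ f (x + s)) ^ 2 * Real.exp (φ (x + s) - f * (x + s)))) s := by
    intro s _
    dsimp only
    have harg : φ (x + s) - φ x - f * s = (f * x - φ x) + (φ (x + s) - f * (x + s)) := by ring
    rw [harg, Real.exp_add]
    ring
  rw [intervalIntegral.integral_congr h1, intervalIntegral.integral_const_mul]
  congr 1
  have h2 := intervalIntegral.integral_comp_add_left (a := (0:ℝ)) (b := 1)
    (fun t => (w0 φ f t) ^ 2 * Real.exp (φ t - f * t)) x
  simpa using h2

lemma w1_cont (hφc : Continuous φ) (f : ℝ) : Continuous (w1 φ f) := by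
  have hG : Continuous fun t => (w0 φ f t) ^ 2 * Real.exp (φ t - f * t) := by
    have := w0_cont hφc f
    fun_prop
  have : w1 φ f = fun x => Real.exp (f * x - φ x)
      * ∫ t in x..x+1, (w0 φ f t) ^ 2 * Real.exp (φ t - f * t) := funext (w1_eq hφc f)
  rw [this]
  exact ((continuous_const.mul continuous_id).sub hφc).rexp.mul (cont_shift_int _ hG)

lemma lA_cont (hφc : Continuous φ) :
    Continuous fun x => ∫ s in (0:ℝ)..1,
      2 * w0 φ 0 (x + s) * uu φ (x + s) * Real.exp (φ (x + s) - φ x) := by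
  have hG : Continuous fun t => 2 * w0 φ 0 t * uu φ t * Real.exp (φ t) := by
    have h1 := w0_cont hφc 0
    have h2 := uu_cont hφc
    fun_prop
  have heq : (fun x => ∫ s in (0:ℝ)..1,
      2 * w0 φ 0 (x + s) * uu φ (x + s) * Real.exp (φ (x + s) - φ x))
      = fun x => Real.exp (-φ x) * ∫ s in (0:ℝ)..1,
          2 * w0 φ 0 (x + s) * uu φ (x + s) * Real.exp (φ (x + s)) := by
    funext x
    rw [← intervalIntegral.integral_const_mul]
    apply intervalIntegral.integral_congr
    intro s _
    dsimp only
    rw [Real.exp_sub, div_eq_mul_inv, ← Real.exp_neg]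
    ring
  rw [heq]
  exact hφc.neg.rexp.mul (cont_param0 _ hG)

lemma lB_cont (hφc : Continuous φ) :
    Continuous fun x => ∫ s in (0:ℝ)..1,
      (w0 φ 0 (x + s)) ^ 2 * Real.exp (φ (x + s) - φ x) * s := by
  have hG : Continuous fun t => (w0 φ 0 t) ^ 2 * Real.exp (φ t) := by
    have h1 := w0_cont hφc 0
    fun_prop
  have heq : (fun x => ∫ s in (0:ℝ)..1, (w0 φ 0 (x + s)) ^ 2 * Real.exp (φ (x + s) - φ x) * s)
      = fun x => Real.exp (-φ x) * ∫ s in (0:ℝ)..1,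
          ((w0 φ 0 (x + s)) ^ 2 * Real.exp (φ (x + s))) * s := by
    funext x
    rw [← intervalIntegral.integral_const_mul]
    apply intervalIntegral.integral_congr
    intro s _
    dsimp only
    rw [Real.exp_sub, div_eq_mul_inv, ← Real.exp_neg]
    ring
  rw [heq]
  exact hφc.neg.rexp.mul (cont_param1 _ hG)

end Taylor

section M1T

variable {φ : ℝ → ℝ} {K : ℝ}

set_option maxHeartbeats 2000000 in
lemma M1_taylor (hφc : Continuous φ) (hK : ∀ x, |φ x| ≤ K) (hK0 : 0 ≤ K)
    {f : ℝ} (hf : |f| ≤ 1) :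
    |M1 φ f - M1 φ 0 + f *
      ((∫ x in (0:ℝ)..1, ∫ s in (0:ℝ)..1,
          2 * w0 φ 0 (x + s) * uu φ (x + s) * Real.exp (φ (x + s) - φ x))
        + ∫ x in (0:ℝ)..1, ∫ s in (0:ℝ)..1,
          (w0 φ 0 (x + s)) ^ 2 * Real.exp (φ (x + s) - φ x) * s)|
    ≤ 17 * Real.exp (2 * K + 1) ^ 3 * f ^ 2 := by
  set E := Real.exp (2 * K + 1) with hE
  have hE0 : (0:ℝ) < E := Real.exp_pos _
  have hEK : Real.exp (2 * K) ≤ E := Real.exp_le_exp.2 (by linarith)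
  -- inner pointwise bound
  have hptbound : ∀ x : ℝ, ∀ s ∈ Set.uIoc (0:ℝ) 1,
      |(w0 φ f (x + s)) ^ 2 * Real.exp (φ (x + s) - φ x - f * s)
        - (w0 φ 0 (x + s)) ^ 2 * Real.exp (φ (x + s) - φ x - 0 * s)
        + f * (2 * w0 φ 0 (x + s) * uu φ (x + s) * Real.exp (φ (x + s) - φ x)
          + (w0 φ 0 (x + s)) ^ 2 * Real.exp (φ (x + s) - φ x) * s)|
      ≤ 17 * E ^ 3 * f ^ 2 := by
    intro x s hs
    obtain ⟨hs0, hs1⟩ := mem_uIoc01 hs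
    set p := w0 φ f (x + s) with hpdef
    set q := w0 φ 0 (x + s) with hqdef
    set v := uu φ (x + s) with hvdef
    set r := Real.exp (-(f * s)) with hrdef
    have hsabs : |s| ≤ 1 := by rw [abs_of_pos hs0]; exact hs1
    have hfs : |f * s| ≤ 1 := by
      rw [abs_mul]; exact mul_le_one₀ hf (abs_nonneg _) hsabs
    have hp : |p| ≤ E := w0_le hK hf (x + s)
    have hq : |q| ≤ E := w0_le hK (by norm_num) (x + s)
    have hv : |v| ≤ E := uu_le hK (x + s)
    have hr : |r| ≤ 3 := by
      rw [hrdef, abs_of_pos (Real.exp_pos _)]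
      calc Real.exp (-(f * s)) ≤ Real.exp 1 :=
            Real.exp_le_exp.2 (le_trans (neg_le_abs _) hfs)
        _ ≤ 3 := by linarith [Real.exp_one_lt_d9.le]
    have hr1 : |r - 1| ≤ 2 * |f| := by
      have := Real.abs_exp_sub_one_le (x := -(f * s)) (by rwa [abs_neg])
      calc |r - 1| ≤ 2 * |(-(f * s))| := this
        _ = 2 * (|f| * |s|) := by rw [abs_neg, abs_mul]
        _ ≤ 2 * (|f| * 1) := by gcongr
        _ = 2 * |f| := by ring
    have hr2 : |r - 1 + f * s| ≤ f ^ 2 := by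
      have habs : |(-(f * s))| ≤ 1 := by rwa [abs_neg]
      have hb := Real.abs_exp_sub_one_sub_id_le habs
      calc |r - 1 + f * s| = |Real.exp (-(f * s)) - 1 - (-(f * s))| := by rw [hrdef]; ring_nf
        _ ≤ (-(f * s)) ^ 2 := hb
        _ = f ^ 2 * s ^ 2 := by ring
        _ ≤ f ^ 2 * 1 := by
              have hs2 : s ^ 2 ≤ 1 := by nlinarith
              nlinarith [sq_nonneg f]
        _ = f ^ 2 := mul_one _
    have hpm : |p - (q - f * v)| ≤ E * f ^ 2 := by
      have h := w0_taylor hφc hK hf (x + s)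
      have heq : p - (q - f * v) = w0 φ f (x + s) - w0 φ 0 (x + s) + f * uu φ (x + s) := by
        rw [hpdef, hqdef, hvdef]; ring
      rw [heq]
      exact h.trans (by nlinarith [sq_nonneg f])
    have hm : |q - f * v| ≤ 2 * E := by
      have hfv : |f * v| ≤ 1 * E := by
        rw [abs_mul]
        exact mul_le_mul hf hv (abs_nonneg _) zero_le_one
      calc |q - f * v| ≤ |q| + |f * v| := abs_sub _ _
        _ ≤ E + 1 * E := add_le_add hq hfv
        _ = 2 * E := by ring
    have hppm : |p + (q - f * v)| ≤ 3 * E := by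
      calc |p + (q - f * v)| ≤ |p| + |q - f * v| := abs_add_le _ _
        _ ≤ E + 2 * E := add_le_add hp hm
        _ = 3 * E := by ring
    -- rewrite exponentials
    have hexp1 : Real.exp (φ (x + s) - φ x - f * s)
        = Real.exp (φ (x + s) - φ x) * r := by
      rw [hrdef, ← Real.exp_add, sub_eq_add_neg (φ (x + s) - φ x) (f * s)]
    have hexp2 : Real.exp (φ (x + s) - φ x - 0 * s) = Real.exp (φ (x + s) - φ x) := by
      congr 1; ring
    have hΔ : Real.exp (φ (x + s) - φ x) ≤ E := by
      rw [hE]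
      apply Real.exp_le_exp.2
      have := diff_abs_le hK x s
      nlinarith [le_abs_self (φ (x + s) - φ x)]
    rw [hexp1, hexp2]
    have hfactor : p ^ 2 * (Real.exp (φ (x + s) - φ x) * r)
        - q ^ 2 * Real.exp (φ (x + s) - φ x)
        + f * (2 * q * v * Real.exp (φ (x + s) - φ x)
          + q ^ 2 * Real.exp (φ (x + s) - φ x) * s)
        = Real.exp (φ (x + s) - φ x)
          * (p ^ 2 * r - q ^ 2 + f * (2 * q * v) + f * (q ^ 2 * s)) := by ring
    rw [hfactor, abs_mul, abs_of_pos (Real.exp_pos _)]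
    have hkill : |p ^ 2 * r - q ^ 2 + f * (2 * q * v) + f * (q ^ 2 * s)|
        ≤ 17 * E ^ 2 * f ^ 2 := by
      have hdecomp : p ^ 2 * r - q ^ 2 + f * (2 * q * v) + f * (q ^ 2 * s)
          = (p - (q - f * v)) * (p + (q - f * v)) * r
            - 2 * f * (q * v) * (r - 1) + f ^ 2 * v ^ 2 * r
            + q ^ 2 * (r - 1 + f * s) := by ring
      rw [hdecomp]
      have t1 : |(p - (q - f * v)) * (p + (q - f * v)) * r| ≤ 9 * E ^ 2 * f ^ 2 := by
        calc |(p - (q - f * v)) * (p + (q - f * v)) * r| ≤ (E * f ^ 2) * (3 * E) * 3 :=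
              abs_mul3_le hpm hppm hr
          _ = 9 * E ^ 2 * f ^ 2 := by ring
      have t2 : |2 * f * (q * v) * (r - 1)| ≤ 4 * E ^ 2 * f ^ 2 := by
        have hqv : |q * v| ≤ E * E := by
          rw [abs_mul]; exact mul_le_mul hq hv (abs_nonneg _) hE0.le
        have h2f : |2 * f| ≤ 2 * |f| := by rw [abs_mul]; simp
        calc |2 * f * (q * v) * (r - 1)| ≤ (2 * |f|) * (E * E) * (2 * |f|) :=
              abs_mul3_le h2f hqv hr1
          _ = 4 * E ^ 2 * |f| ^ 2 := by ring
          _ = 4 * E ^ 2 * f ^ 2 := by rw [sq_abs]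
      have t3 : |f ^ 2 * v ^ 2 * r| ≤ 3 * E ^ 2 * f ^ 2 := by
        have hf2 : |f ^ 2| ≤ f ^ 2 := le_of_eq (abs_of_nonneg (sq_nonneg f))
        have hv2 : |v ^ 2| ≤ E ^ 2 := by
          rw [abs_pow]
          exact pow_le_pow_left₀ (abs_nonneg v) hv 2
        calc |f ^ 2 * v ^ 2 * r| ≤ f ^ 2 * E ^ 2 * 3 := abs_mul3_le hf2 hv2 hr
          _ = 3 * E ^ 2 * f ^ 2 := by ring
      have t4 : |q ^ 2 * (r - 1 + f * s)| ≤ E ^ 2 * f ^ 2 := by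
        have hq2 : |q ^ 2| ≤ E ^ 2 := by
          rw [abs_pow]
          exact pow_le_pow_left₀ (abs_nonneg q) hq 2
        rw [abs_mul]
        exact mul_le_mul hq2 hr2 (abs_nonneg _) (by positivity)
      calc |(p - (q - f * v)) * (p + (q - f * v)) * r - 2 * f * (q * v) * (r - 1)
            + f ^ 2 * v ^ 2 * r + q ^ 2 * (r - 1 + f * s)|
          ≤ |(p - (q - f * v)) * (p + (q - f * v)) * r - 2 * f * (q * v) * (r - 1)
            + f ^ 2 * v ^ 2 * r| + |q ^ 2 * (r - 1 + f * s)| := abs_add_le _ _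
        _ ≤ (|(p - (q - f * v)) * (p + (q - f * v)) * r - 2 * f * (q * v) * (r - 1)|
            + |f ^ 2 * v ^ 2 * r|) + |q ^ 2 * (r - 1 + f * s)| := by
              gcongr
              exact abs_add_le _ _
        _ ≤ ((|(p - (q - f * v)) * (p + (q - f * v)) * r| + |2 * f * (q * v) * (r - 1)|)
            + |f ^ 2 * v ^ 2 * r|) + |q ^ 2 * (r - 1 + f * s)| := by
              gcongr
              exact abs_sub _ _
        _ ≤ ((9 * E ^ 2 * f ^ 2 + 4 * E ^ 2 * f ^ 2) + 3 * E ^ 2 * f ^ 2) + E ^ 2 * f ^ 2 := by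
              gcongr
        _ = 17 * E ^ 2 * f ^ 2 := by ring
    calc Real.exp (φ (x + s) - φ x)
          * |p ^ 2 * r - q ^ 2 + f * (2 * q * v) + f * (q ^ 2 * s)|
        ≤ E * (17 * E ^ 2 * f ^ 2) :=
          mul_le_mul hΔ hkill (abs_nonneg _) hE0.le
      _ = 17 * E ^ 3 * f ^ 2 := by ring
  -- assemble
  have hw1f : Continuous (w1 φ f) := w1_cont hφc f
  have hw10 : Continuous (w1 φ 0) := w1_cont hφc 0
  have hlAc := lA_cont hφc
  have hlBc := lB_cont hφc
  have key : M1 φ f - M1 φ 0 + f *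
      ((∫ x in (0:ℝ)..1, ∫ s in (0:ℝ)..1,
          2 * w0 φ 0 (x + s) * uu φ (x + s) * Real.exp (φ (x + s) - φ x))
        + ∫ x in (0:ℝ)..1, ∫ s in (0:ℝ)..1,
          (w0 φ 0 (x + s)) ^ 2 * Real.exp (φ (x + s) - φ x) * s)
      = ∫ x in (0:ℝ)..1, (w1 φ f x - w1 φ 0 x
          + f * ((∫ s in (0:ℝ)..1,
              2 * w0 φ 0 (x + s) * uu φ (x + s) * Real.exp (φ (x + s) - φ x))
            + ∫ s in (0:ℝ)..1,
              (w0 φ 0 (x + s)) ^ 2 * Real.exp (φ (x + s) - φ x) * s)) := by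
    unfold M1
    rw [← intervalIntegral.integral_add (hlAc.intervalIntegrable 0 1)
        (hlBc.intervalIntegrable 0 1),
      ← intervalIntegral.integral_const_mul,
      ← intervalIntegral.integral_sub (hw1f.intervalIntegrable 0 1)
        (hw10.intervalIntegrable 0 1),
      ← intervalIntegral.integral_add (show IntervalIntegrable
          (fun x => w1 φ f x - w1 φ 0 x) volume 0 1 from (hw1f.sub hw10).intervalIntegrable 0 1)
        (show IntervalIntegrable (fun x => f * ((∫ s in (0:ℝ)..1,
            2 * w0 φ 0 (x + s) * uu φ (x + s) * Real.exp (φ (x + s) - φ x))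
          + ∫ s in (0:ℝ)..1,
            (w0 φ 0 (x + s)) ^ 2 * Real.exp (φ (x + s) - φ x) * s)) volume 0 1 from
          (continuous_const.mul (hlAc.add hlBc)).intervalIntegrable 0 1)]
  rw [key]
  have hw0f := w0_cont hφc f
  have hw00 := w0_cont hφc 0
  have huuc := uu_cont hφc
  have hinner : ∀ x : ℝ, |w1 φ f x - w1 φ 0 x
      + f * ((∫ s in (0:ℝ)..1,
          2 * w0 φ 0 (x + s) * uu φ (x + s) * Real.exp (φ (x + s) - φ x))
        + ∫ s in (0:ℝ)..1,
          (w0 φ 0 (x + s)) ^ 2 * Real.exp (φ (x + s) - φ x) * s)|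
      ≤ 17 * E ^ 3 * f ^ 2 := by
    intro x
    have ikey : w1 φ f x - w1 φ 0 x
        + f * ((∫ s in (0:ℝ)..1,
            2 * w0 φ 0 (x + s) * uu φ (x + s) * Real.exp (φ (x + s) - φ x))
          + ∫ s in (0:ℝ)..1,
            (w0 φ 0 (x + s)) ^ 2 * Real.exp (φ (x + s) - φ x) * s)
        = ∫ s in (0:ℝ)..1, ((w0 φ f (x + s)) ^ 2 * Real.exp (φ (x + s) - φ x - f * s)
            - (w0 φ 0 (x + s)) ^ 2 * Real.exp (φ (x + s) - φ x - 0 * s)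
            + f * (2 * w0 φ 0 (x + s) * uu φ (x + s) * Real.exp (φ (x + s) - φ x)
              + (w0 φ 0 (x + s)) ^ 2 * Real.exp (φ (x + s) - φ x) * s)) := by
      unfold w1
      rw [← intervalIntegral.integral_add
          ((by fun_prop : Continuous fun s =>
            2 * w0 φ 0 (x + s) * uu φ (x + s) * Real.exp (φ (x + s) - φ x)).intervalIntegrable 0 1)
          ((by fun_prop : Continuous fun s =>
            (w0 φ 0 (x + s)) ^ 2 * Real.exp (φ (x + s) - φ x) * s).intervalIntegrable 0 1),
        ← intervalIntegral.integral_const_mul,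
        ← intervalIntegral.integral_sub
          ((by fun_prop : Continuous fun s =>
            (w0 φ f (x + s)) ^ 2 * Real.exp (φ (x + s) - φ x - f * s)).intervalIntegrable 0 1)
          ((by fun_prop : Continuous fun s =>
            (w0 φ 0 (x + s)) ^ 2 * Real.exp (φ (x + s) - φ x - 0 * s)).intervalIntegrable 0 1),
        ← intervalIntegral.integral_add
          (((by fun_prop : Continuous fun s =>
            (w0 φ f (x + s)) ^ 2 * Real.exp (φ (x + s) - φ x - f * s)).intervalIntegrable 0 1).sub
            ((by fun_prop : Continuous fun s =>
              (w0 φ 0 (x + s)) ^ 2 * Real.exp (φ (x + s) - φ x - 0 * s)).intervalIntegrable 0 1))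
          ((by fun_prop : Continuous fun s =>
            f * (2 * w0 φ 0 (x + s) * uu φ (x + s) * Real.exp (φ (x + s) - φ x)
              + (w0 φ 0 (x + s)) ^ 2 * Real.exp (φ (x + s) - φ x) * s)).intervalIntegrable 0 1)]
    rw [ikey]
    have h := intervalIntegral.norm_integral_le_of_norm_le_const
      (C := 17 * E ^ 3 * f ^ 2) (a := (0:ℝ)) (b := 1)
      (f := fun s => ((w0 φ f (x + s)) ^ 2 * Real.exp (φ (x + s) - φ x - f * s)
          - (w0 φ 0 (x + s)) ^ 2 * Real.exp (φ (x + s) - φ x - 0 * s)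
          + f * (2 * w0 φ 0 (x + s) * uu φ (x + s) * Real.exp (φ (x + s) - φ x)
            + (w0 φ 0 (x + s)) ^ 2 * Real.exp (φ (x + s) - φ x) * s)))
      (fun s hs => by rw [Real.norm_eq_abs]; exact hptbound x s hs)
    calc |_| ≤ 17 * E ^ 3 * f ^ 2 * |1 - (0:ℝ)| := h
      _ = 17 * E ^ 3 * f ^ 2 := by norm_num
  have h := intervalIntegral.norm_integral_le_of_norm_le_const
    (C := 17 * E ^ 3 * f ^ 2) (a := (0:ℝ)) (b := 1)
    (f := fun x => w1 φ f x - w1 φ 0 x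
      + f * ((∫ s in (0:ℝ)..1,
          2 * w0 φ 0 (x + s) * uu φ (x + s) * Real.exp (φ (x + s) - φ x))
        + ∫ s in (0:ℝ)..1,
          (w0 φ 0 (x + s)) ^ 2 * Real.exp (φ (x + s) - φ x) * s))
    (fun x _ => by rw [Real.norm_eq_abs]; exact hinner x)
  calc |_| ≤ 17 * E ^ 3 * f ^ 2 * |1 - (0:ℝ)| := h
    _ = 17 * E ^ 3 * f ^ 2 := by norm_num

end M1T

/-- As `f → 0`, the effective diffusion coefficient
`D(f) = M₁(f)/M₀(f)³` satisfies `D(f) = (1/a₀)·(1 + f·(a₁/a₀ − 1/2)) + O(f²)`. -/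
theorem stmt_10 (φ : ℝ → ℝ) (hφc : Continuous φ) (hφper : ∀ x, φ (x + 1) = φ x)
    (a0 a1 : ℝ)
    (ha0 : a0 = (∫ x in (0:ℝ)..1, Real.exp (-φ x)) * ∫ s in (0:ℝ)..1, Real.exp (φ s))
    (ha1 : a1 = ∫ x in (0:ℝ)..1, ∫ s in (0:ℝ)..1, Real.exp (φ (x + s) - φ x) * s)
    (D : ℝ → ℝ) (hD : ∀ f, D f = M1 φ f / (M0 φ f) ^ 3) :
    (fun f => D f - 1 / a0 - f / a0 * (a1 / a0 - 1 / 2)) =O[nhds 0]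
      (fun f => f ^ 2) := by
  obtain ⟨K, hK0, hK⟩ := phi_bdd φ hφc hφper
  set E := Real.exp (2 * K + 1) with hE
  have hE0 : (0:ℝ) < E := Real.exp_pos _
  have hEK : Real.exp (2 * K) ≤ E := Real.exp_le_exp.2 (by linarith)
  set δ := Real.exp (-(2 * K + 1)) with hδdef
  have hδ0 : (0:ℝ) < δ := Real.exp_pos _
  have ha1u : a1 = ∫ x in (0:ℝ)..1, uu φ x := by rw [ha1]; rfl
  have hM00 : M0 φ 0 = a0 := by rw [M0_zero hφc hφper, ha0]
  have hM10 : M1 φ 0 = a0 ^ 2 := by rw [M1_zero hφc hφper, ha0]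
  have ha0pos : 0 < a0 := by
    rw [ha0]
    have h1 : 0 < ∫ x in (0:ℝ)..1, Real.exp (-φ x) :=
      intervalIntegral.intervalIntegral_pos_of_pos
        ((hφc.neg.rexp).intervalIntegrable 0 1) (fun x => Real.exp_pos _) one_pos
    have h2 : 0 < ∫ s in (0:ℝ)..1, Real.exp (φ s) :=
      intervalIntegral.intervalIntegral_pos_of_pos
        (hφc.rexp.intervalIntegrable 0 1) (fun x => Real.exp_pos _) one_pos
    exact mul_pos h1 h2
  have hM0T : ∀ g : ℝ, |g| ≤ 1 → |M0 φ g - a0 + g * a1| ≤ E * g ^ 2 := by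
    intro g hg
    have h := M0_taylor hφc hK hg
    rw [hM00, ← ha1u] at h
    exact h.trans (mul_le_mul_of_nonneg_right hEK (sq_nonneg g))
  have hM1T : ∀ g : ℝ, |g| ≤ 1 →
      |M1 φ g - a0 ^ 2 + g * (2 * a0 * a1 + a0 ^ 2 / 2)| ≤ 17 * E ^ 3 * g ^ 2 := by
    intro g hg
    have h := M1_taylor hφc hK hK0 hg
    rw [LA_eq hφc hφper, LB_eq hφc hφper, hM10, ← ha0, ← ha1u] at h
    exact h
  have hlow : ∀ g : ℝ, |g| ≤ 1 → δ ≤ M0 φ g := by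
    intro g hg
    have h0 : δ = ∫ x in (0:ℝ)..1, δ := by simp
    rw [h0]
    exact intervalIntegral.integral_mono_on (by norm_num) intervalIntegrable_const
      ((w0_cont hφc g).intervalIntegrable 0 1)
      (fun x _ => by rw [hδdef]; exact w0_ge hφc hK hg x)
  have hup : ∀ g : ℝ, |g| ≤ 1 → |M0 φ g| ≤ E := by
    intro g hg
    have h := intervalIntegral.norm_integral_le_of_norm_le_const
      (C := E) (a := (0:ℝ)) (b := 1) (f := fun x => w0 φ g x)
      (fun x _ => by rw [Real.norm_eq_abs, hE]; exact w0_le hK hg x)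
    unfold M0
    simpa using h
  have hev : ∀ᶠ g : ℝ in nhds 0, |g| ≤ 1 := by
    filter_upwards [Metric.ball_mem_nhds (0:ℝ) one_pos] with g hg
    rw [Metric.mem_ball, Real.dist_eq, sub_zero] at hg
    exact hg.le
  have hsqnorm : ∀ g : ℝ, ‖g ^ 2‖ = g ^ 2 := fun g => by
    rw [Real.norm_eq_abs, abs_of_nonneg (sq_nonneg g)]
  have hO1 : (fun g => M1 φ g - a0 ^ 2 + g * (2 * a0 * a1 + a0 ^ 2 / 2))
      =O[nhds 0] (fun g => g ^ 2) := by
    rw [Asymptotics.isBigO_iff]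
    refine ⟨17 * E ^ 3, ?_⟩
    filter_upwards [hev] with g hg
    rw [Real.norm_eq_abs, hsqnorm g]
    exact hM1T g hg
  have hO0 : (fun g => M0 φ g - a0 + g * a1) =O[nhds 0] (fun g => g ^ 2) := by
    rw [Asymptotics.isBigO_iff]
    refine ⟨E, ?_⟩
    filter_upwards [hev] with g hg
    rw [Real.norm_eq_abs, hsqnorm g]
    exact hM0T g hg
  have htO : (fun g : ℝ => 1 / a0 + g / a0 * (a1 / a0 - 1 / 2))
      =O[nhds 0] (fun _ => (1:ℝ)) := by
    have htc : Continuous fun g : ℝ => 1 / a0 + g / a0 * (a1 / a0 - 1 / 2) := by fun_prop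
    exact (htc.tendsto 0).isBigO_one ℝ
  have hQO : (fun g : ℝ => -(3/2) * a0 * a1 + ((3/2) * a1 ^ 2 - 2 * a1 ^ 3 / a0) * g
      + (a1 / a0 ^ 2 - 1 / (2 * a0)) * a1 ^ 3 * g ^ 2) =O[nhds 0] (fun _ => (1:ℝ)) := by
    have hc : Continuous fun g : ℝ => -(3/2) * a0 * a1 + ((3/2) * a1 ^ 2 - 2 * a1 ^ 3 / a0) * g
        + (a1 / a0 ^ 2 - 1 / (2 * a0)) * a1 ^ 3 * g ^ 2 := by fun_prop
    exact (hc.tendsto 0).isBigO_one ℝ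
  have hPQ : ∀ g : ℝ, a0 ^ 2 - g * (2 * a0 * a1 + a0 ^ 2 / 2)
      - (1 / a0 + g / a0 * (a1 / a0 - 1 / 2)) * (a0 - g * a1) ^ 3
      = g ^ 2 * (-(3/2) * a0 * a1 + ((3/2) * a1 ^ 2 - 2 * a1 ^ 3 / a0) * g
        + (a1 / a0 ^ 2 - 1 / (2 * a0)) * a1 ^ 3 * g ^ 2) := by
    intro g
    field_simp
    ring
  have hO2 : (fun g : ℝ => a0 ^ 2 - g * (2 * a0 * a1 + a0 ^ 2 / 2)
      - (1 / a0 + g / a0 * (a1 / a0 - 1 / 2)) * (a0 - g * a1) ^ 3)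
      =O[nhds 0] (fun g => g ^ 2) := by
    have heq : (fun g : ℝ => a0 ^ 2 - g * (2 * a0 * a1 + a0 ^ 2 / 2)
        - (1 / a0 + g / a0 * (a1 / a0 - 1 / 2)) * (a0 - g * a1) ^ 3)
        = fun g => g ^ 2 * (-(3/2) * a0 * a1 + ((3/2) * a1 ^ 2 - 2 * a1 ^ 3 / a0) * g
          + (a1 / a0 ^ 2 - 1 / (2 * a0)) * a1 ^ 3 * g ^ 2) := funext hPQ
    rw [heq]
    simpa only [mul_one] using (isBigO_refl (fun g : ℝ => g ^ 2) (nhds 0)).mul hQO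
  have hOd : (fun g => a0 - g * a1 - M0 φ g) =O[nhds 0] (fun g => g ^ 2) := by
    have heq : (fun g => a0 - g * a1 - M0 φ g) = fun g => -(M0 φ g - a0 + g * a1) := by
      funext g; ring
    rw [heq]
    exact hO0.neg_left
  have hOq : (fun g => (a0 - g * a1) ^ 2 + (a0 - g * a1) * M0 φ g + (M0 φ g) ^ 2)
      =O[nhds 0] (fun _ => (1:ℝ)) := by
    rw [Asymptotics.isBigO_iff]
    refine ⟨(|a0| + |a1|) ^ 2 + (|a0| + |a1|) * E + E ^ 2, ?_⟩
    filter_upwards [hev] with g hg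
    have hb : |a0 - g * a1| ≤ |a0| + |a1| := by
      have h1 : |g * a1| ≤ 1 * |a1| := by
        rw [abs_mul]
        exact mul_le_mul_of_nonneg_right hg (abs_nonneg _)
      calc |a0 - g * a1| ≤ |a0| + |g * a1| := abs_sub _ _
        _ ≤ |a0| + 1 * |a1| := add_le_add le_rfl h1
        _ = |a0| + |a1| := by ring
    have hM := hup g hg
    rw [Real.norm_eq_abs, norm_one, mul_one]
    have t1 : |(a0 - g * a1) ^ 2| ≤ (|a0| + |a1|) ^ 2 := by
      rw [abs_pow]
      exact pow_le_pow_left₀ (abs_nonneg _) hb 2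
    have t2 : |(a0 - g * a1) * M0 φ g| ≤ (|a0| + |a1|) * E := by
      rw [abs_mul]
      exact mul_le_mul hb hM (abs_nonneg _) (by positivity)
    have t3 : |(M0 φ g) ^ 2| ≤ E ^ 2 := by
      rw [abs_pow]
      exact pow_le_pow_left₀ (abs_nonneg _) hM 2
    calc |(a0 - g * a1) ^ 2 + (a0 - g * a1) * M0 φ g + (M0 φ g) ^ 2|
        ≤ |(a0 - g * a1) ^ 2 + (a0 - g * a1) * M0 φ g| + |(M0 φ g) ^ 2| := abs_add_le _ _
      _ ≤ (|(a0 - g * a1) ^ 2| + |(a0 - g * a1) * M0 φ g|) + |(M0 φ g) ^ 2| := by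
          gcongr
          exact abs_add_le _ _
      _ ≤ ((|a0| + |a1|) ^ 2 + (|a0| + |a1|) * E) + E ^ 2 := by gcongr
  have hO3 : (fun g => (1 / a0 + g / a0 * (a1 / a0 - 1 / 2))
      * ((a0 - g * a1) ^ 3 - (M0 φ g) ^ 3)) =O[nhds 0] (fun g => g ^ 2) := by
    have heq : (fun g => (1 / a0 + g / a0 * (a1 / a0 - 1 / 2))
        * ((a0 - g * a1) ^ 3 - (M0 φ g) ^ 3))
        = fun g => (1 / a0 + g / a0 * (a1 / a0 - 1 / 2))
          * ((a0 - g * a1 - M0 φ g)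
            * ((a0 - g * a1) ^ 2 + (a0 - g * a1) * M0 φ g + (M0 φ g) ^ 2)) := by
      funext g; ring
    rw [heq]
    simpa only [mul_one, one_mul] using htO.mul (hOd.mul hOq)
  have hN : (fun g => M1 φ g - (1 / a0 + g / a0 * (a1 / a0 - 1 / 2)) * (M0 φ g) ^ 3)
      =O[nhds 0] (fun g => g ^ 2) := by
    have heq : (fun g => M1 φ g - (1 / a0 + g / a0 * (a1 / a0 - 1 / 2)) * (M0 φ g) ^ 3)
        = fun g => (M1 φ g - a0 ^ 2 + g * (2 * a0 * a1 + a0 ^ 2 / 2))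
          + (a0 ^ 2 - g * (2 * a0 * a1 + a0 ^ 2 / 2)
            - (1 / a0 + g / a0 * (a1 / a0 - 1 / 2)) * (a0 - g * a1) ^ 3)
          + ((1 / a0 + g / a0 * (a1 / a0 - 1 / 2))
            * ((a0 - g * a1) ^ 3 - (M0 φ g) ^ 3)) := by
      funext g; ring
    rw [heq]
    exact (hO1.add hO2).add hO3
  have hinv : (fun g => ((M0 φ g) ^ 3)⁻¹) =O[nhds 0] (fun _ => (1:ℝ)) := by
    rw [Asymptotics.isBigO_iff]
    refine ⟨(δ ^ 3)⁻¹, ?_⟩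
    filter_upwards [hev] with g hg
    have h1 := hlow g hg
    have h2 : δ ^ 3 ≤ (M0 φ g) ^ 3 := pow_le_pow_left₀ hδ0.le h1 3
    have h3 : (0:ℝ) < (M0 φ g) ^ 3 := lt_of_lt_of_le (pow_pos hδ0 3) h2
    rw [Real.norm_eq_abs, norm_one, mul_one, abs_inv, abs_of_pos h3]
    exact inv_anti₀ (pow_pos hδ0 3) h2
  have hfinal : (fun g => D g - 1 / a0 - g / a0 * (a1 / a0 - 1 / 2))
      =ᶠ[nhds 0] fun g => (M1 φ g - (1 / a0 + g / a0 * (a1 / a0 - 1 / 2)) * (M0 φ g) ^ 3)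
        * ((M0 φ g) ^ 3)⁻¹ := by
    filter_upwards [hev] with g hg
    have hM0pos : 0 < M0 φ g := lt_of_lt_of_le hδ0 (hlow g hg)
    have hne : (M0 φ g) ^ 3 ≠ 0 := by positivity
    rw [hD g]
    field_simp
    ring
  refine hfinal.trans_isBigO ?_
  simpa only [mul_one] using hN.mul hinv
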